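/- Define the binary Shannon entropy H₂(x) = −x·log₂x − (1−x)·log₂(1−x), with the convention 0·log₂0 = 0. For every q ∈ (0,1]: the classical-trajectory upper bound satisfies Q_C^UB(1/2, q) = 1 − max{H₂(1/2), H₂(q)} = 0, while the quantum-switch lower bound satisfies Q_QS^LB(1/2, q) = q/2 + max{0, 1 − q/2 + H₂(q/2) − H₂(1/2) − H₂(q)} ≥ q/2 > 0. -/
import Mathlib

/-- The binary Shannon entropy `H₂(x) = −x·log₂x − (1−x)·log₂(1−x)`,
with the convention `0·log₂0 = 0` (automatic since `Real.logb 2 0 = 0`). -/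
noncomputable def H2 (x : ℝ) : ℝ := -(x * Real.logb 2 x) - (1 - x) * Real.logb 2 (1 - x)

lemma H2_eq (x : ℝ) : H2 x = Real.binEntropy x / Real.log 2 := by
  unfold H2 Real.binEntropy Real.logb
  rcases eq_or_ne x 0 with rfl | hx
  · simp
  rcases eq_or_ne x 1 with rfl | hx1
  · simp
  rw [Real.log_inv, Real.log_inv]
  ring

theorem switch_advantage_at_p_half (q : ℝ) (hq : q ∈ Set.Ioc (0:ℝ) 1) :
    (1 - max (H2 (1 / 2)) (H2 q) = 0) ∧
    (q / 2 + max 0 (1 - q / 2 + H2 (q / 2) - H2 (1 / 2) - H2 q) ≥ q / 2) ∧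
    q / 2 > 0 := by
  obtain ⟨hq0, hq1⟩ := hq
  have hlog2 : Real.log 2 > 0 := Real.log_pos (by norm_num)
  have half : H2 (1/2) = 1 := by
    rw [H2_eq]
    rw [show (1:ℝ)/2 = 2⁻¹ by norm_num, Real.binEntropy_two_inv, div_self hlog2.ne']
  have hle : H2 q ≤ 1 := by
    rw [H2_eq, div_le_one hlog2]
    exact Real.binEntropy_le_log_two
  refine ⟨?_, ?_, by linarith⟩
  · rw [max_eq_left (by rw [half]; exact hle), half]; ring
  · exact le_add_of_nonneg_right (le_max_left _ _)
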